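/- arXiv:2209.01197 — 6 statements merged into one kernel-verified Lean document; each statement's English description precedes it below -/
import Mathlib

section
/- Let Q be an ordered abelian group, Z an integer part of Q (with least positive element 1), and L a convex subgroup of Q with 1 ∈ L; set Z_L := Z ∩ L. Then any isomorphism of ordered groups f : Z → Z_L (a group isomorphism that is strictly order-preserving) extends, via the formula f̄(x) := f(⌊x⌋) + {x}, to an isomorphism of ordered groups f̄ : Q → L satisfying f̄(Z) = Z_L and f̄(1) = 1. -/
/-- A subgroup `L` of an ordered abelian group is convex if `x ≤ z ≤ y` with `x, y ∈ L`
implies `z ∈ L`. -/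
def IsConvexAddSubgroup {Q : Type*} [AddCommGroup Q] [LinearOrder Q] [IsOrderedAddMonoid Q] (L : AddSubgroup Q) : Prop :=
  ∀ ⦃x y z : Q⦄, x ∈ L → y ∈ L → x ≤ z → z ≤ y → z ∈ L

/-- `Z` is an integer part of the ordered abelian group `Q`, with least positive element `one`. -/
def IsIntegerPart {Q : Type*} [AddCommGroup Q] [LinearOrder Q] [IsOrderedAddMonoid Q] (Z : AddSubgroup Q) (one : Q) :
    Prop :=
  one ∈ Z ∧ 0 < one ∧ (∀ z ∈ Z, 0 < z → one ≤ z) ∧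
    ∀ x : Q, ∃ n ∈ Z, n ≤ x ∧ x < n + one

/-- `fl` is the floor function associated to the integer part `Z` of `Q`. -/
def IsFloor {Q : Type*} [AddCommGroup Q] [LinearOrder Q] [IsOrderedAddMonoid Q] (Z : AddSubgroup Q) (one : Q)
    (fl : Q → Q) : Prop :=
  ∀ x : Q, fl x ∈ Z ∧ fl x ≤ x ∧ x < fl x + one

theorem stmt_1 {Q : Type*} [AddCommGroup Q] [LinearOrder Q] [IsOrderedAddMonoid Q] (Z L : AddSubgroup Q) (one : Q)
    (fl : Q → Q) (hZ : IsIntegerPart Z one) (hfl : IsFloor Z one fl)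
    (hL : IsConvexAddSubgroup L) (honeL : one ∈ L)
    (f : Q → Q)
    (hf_mem : ∀ x ∈ Z, f x ∈ Z ⊓ L)
    (hf_add : ∀ x ∈ Z, ∀ y ∈ Z, f (x + y) = f x + f y)
    (hf_mono : ∀ x ∈ Z, ∀ y ∈ Z, x < y → f x < f y)
    (hf_surj : ∀ y ∈ Z ⊓ L, ∃ x ∈ Z, f x = y) :
    letI fbar : Q → Q := fun x => f (fl x) + (x - fl x)
    (∀ x : Q, fbar x ∈ L) ∧
    (∀ x y : Q, fbar (x + y) = fbar x + fbar y) ∧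
    (∀ x y : Q, x < y → fbar x < fbar y) ∧
    (∀ y ∈ L, ∃ x : Q, fbar x = y) ∧
    fbar '' (Z : Set Q) = ((Z ⊓ L : AddSubgroup Q) : Set Q) ∧
    fbar one = one := by
  obtain ⟨h1Z, h1pos, hleast, _⟩ := hZ
  have key : ∀ z ∈ Z, z < one → z ≤ 0 := by
    intro z hz hlt
    by_contra h
    push_neg at h
    exact absurd (hleast z hz h) (not_le.2 hlt)
  have flu : ∀ n ∈ Z, ∀ x : Q, n ≤ x → x < n + one → fl x = n := by
    intro n hn x h1 h2
    obtain ⟨hm, hm1, hm2⟩ := hfl x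
    have a : fl x - n < one := sub_lt_iff_lt_add'.mpr (lt_of_le_of_lt hm1 h2)
    have b : n - fl x < one := sub_lt_iff_lt_add'.mpr (lt_of_le_of_lt h1 hm2)
    exact le_antisymm (sub_nonpos.mp (key _ (Z.sub_mem hm hn) a))
      (sub_nonpos.mp (key _ (Z.sub_mem hn hm) b))
  have hf0 : f 0 = 0 := by
    have h := hf_add 0 Z.zero_mem 0 Z.zero_mem
    simp only [add_zero] at h
    exact (left_eq_add.mp h)
  have hf1 : f one = one := by
    obtain ⟨x, hx, hfx⟩ := hf_surj one ⟨h1Z, honeL⟩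
    have hfoneZ : f one ∈ Z := (hf_mem one h1Z).1
    have hfonePos : 0 < f one := by
      have h := hf_mono 0 Z.zero_mem one h1Z h1pos
      rwa [hf0] at h
    have hone_le : one ≤ f one := hleast _ hfoneZ hfonePos
    have hxle : x ≤ one := by
      by_contra h
      push_neg at h
      have h2 := hf_mono one h1Z x hx h
      rw [hfx] at h2
      exact absurd h2 (not_lt.2 hone_le)
    have hxge : one ≤ x := by
      have hx0 : 0 < x := by
        rcases lt_trichotomy x 0 with h | h | h
        · have h2 := hf_mono x hx 0 Z.zero_mem h
          rw [hf0, hfx] at h2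
          exact absurd h2 (not_lt.2 h1pos.le)
        · rw [h, hf0] at hfx
          exact absurd hfx (ne_of_lt h1pos)
        · exact h
      exact hleast x hx hx0
    have hxone : x = one := le_antisymm hxle hxge
    rw [hxone] at hfx
    exact hfx
  have flz : ∀ z ∈ Z, fl z = z := fun z hz =>
    flu z hz z le_rfl (lt_add_of_pos_right z h1pos)
  refine ⟨?_, ?_, ?_, ?_, ?_, ?_⟩
  · -- membership in L
    intro x
    obtain ⟨hm, h1, h2⟩ := hfl x
    have hr : x - fl x ∈ L :=
      hL L.zero_mem honeL (sub_nonneg.mpr h1) (sub_lt_iff_lt_add'.mpr h2).le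
    exact L.add_mem (hf_mem _ hm).2 hr
  · -- additivity
    intro x y
    obtain ⟨hmx, hx1, hx2⟩ := hfl x
    obtain ⟨hmy, hy1, hy2⟩ := hfl y
    show f (fl (x + y)) + (x + y - fl (x + y)) = _
    have hrx : x - fl x < one := sub_lt_iff_lt_add'.mpr hx2
    have hry : y - fl y < one := sub_lt_iff_lt_add'.mpr hy2
    by_cases h : x - fl x + (y - fl y) < one
    · have hlow : fl x + fl y ≤ x + y := add_le_add hx1 hy1
      have hhigh : x + y < fl x + fl y + one := by
        have e : x + y - (fl x + fl y) = x - fl x + (y - fl y) := by abel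
        have h' : x + y - (fl x + fl y) < one := by rw [e]; exact h
        exact sub_lt_iff_lt_add'.mp h'
      have heq : fl (x + y) = fl x + fl y :=
        flu _ (Z.add_mem hmx hmy) _ hlow hhigh
      rw [heq, hf_add _ hmx _ hmy]
      dsimp only
      abel
    · push_neg at h
      have hlow : fl x + fl y + one ≤ x + y := by
        have e : x + y - (fl x + fl y) = x - fl x + (y - fl y) := by abel
        have h' : one ≤ x + y - (fl x + fl y) := by rw [e]; exact h
        have h'' : fl x + fl y + one ≤ fl x + fl y + (x + y - (fl x + fl y)) :=
          add_le_add_right h' _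
        have e2 : fl x + fl y + (x + y - (fl x + fl y)) = x + y := by abel
        rwa [e2] at h''
      have hhigh : x + y < fl x + fl y + one + one := by
        have h' : x - fl x + (y - fl y) < one + one := add_lt_add hrx hry
        have e : x + y = fl x + fl y + (x - fl x + (y - fl y)) := by abel
        rw [e]
        have := add_lt_add_right h' (fl x + fl y)
        have e2 : fl x + fl y + (one + one) = fl x + fl y + one + one := by abel
        rwa [e2] at this
      have heq : fl (x + y) = fl x + fl y + one :=
        flu _ (Z.add_mem (Z.add_mem hmx hmy) h1Z) _ hlow hhigh
      rw [heq, hf_add _ (Z.add_mem hmx hmy) _ h1Z, hf_add _ hmx _ hmy, hf1]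
      dsimp only
      abel
  · -- strict monotonicity
    intro x y hxy
    obtain ⟨hmx, hx1, hx2⟩ := hfl x
    obtain ⟨hmy, hy1, hy2⟩ := hfl y
    show f (fl x) + (x - fl x) < f (fl y) + (y - fl y)
    have hle : fl x ≤ fl y := by
      have hlt1 : fl x < fl y + one :=
        lt_of_le_of_lt hx1 (lt_trans hxy hy2)
      have h' : fl x - fl y < one := sub_lt_iff_lt_add'.mpr hlt1
      exact sub_nonpos.mp (key _ (Z.sub_mem hmx hmy) h')
    rcases eq_or_lt_of_le hle with heq | hlt
    · rw [← heq]
      exact add_lt_add_right (sub_lt_sub_right hxy (fl x)) _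
    · have h1 : f (fl x) < f (fl y) := hf_mono _ hmx _ hmy hlt
      have h2 : f (fl y) - f (fl x) ∈ Z := Z.sub_mem (hf_mem _ hmy).1 (hf_mem _ hmx).1
      have h3 : one ≤ f (fl y) - f (fl x) := hleast _ h2 (sub_pos.mpr h1)
      have h4 : x - fl x < f (fl y) - f (fl x) :=
        lt_of_lt_of_le (sub_lt_iff_lt_add'.mpr hx2) h3
      calc f (fl x) + (x - fl x) < f (fl x) + (f (fl y) - f (fl x)) :=
            add_lt_add_right h4 _
        _ = f (fl y) := by abel
        _ ≤ f (fl y) + (y - fl y) := le_add_of_nonneg_right (sub_nonneg.mpr hy1)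
  · -- surjectivity onto L
    intro y hy
    obtain ⟨hny, h1, h2⟩ := hfl y
    have hnL : fl y ∈ L :=
      hL (L.sub_mem hy honeL) hy (sub_lt_iff_lt_add.mpr h2).le h1
    obtain ⟨m, hm, hfm⟩ := hf_surj (fl y) ⟨hny, hnL⟩
    refine ⟨m + (y - fl y), ?_⟩
    have hflm : fl (m + (y - fl y)) = m :=
      flu m hm _ (le_add_of_nonneg_right (sub_nonneg.mpr h1))
        (add_lt_add_right (sub_lt_iff_lt_add'.mpr h2) m)
    show f (fl (m + (y - fl y))) + (m + (y - fl y) - fl (m + (y - fl y))) = y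
    rw [hflm, hfm]
    abel
  · -- image of Z
    ext y
    simp only [Set.mem_image, SetLike.mem_coe]
    constructor
    · rintro ⟨z, hz, rfl⟩
      have e : f (fl z) + (z - fl z) = f z := by rw [flz z hz]; abel
      rw [e]
      exact hf_mem z hz
    · intro hy
      obtain ⟨m, hm, hfm⟩ := hf_surj y hy
      exact ⟨m, hm, by rw [flz m hm, ← hfm]; abel⟩
  · -- fbar one = one
    show f (fl one) + (one - fl one) = one
    rw [flz one h1Z, hf1]
    abel
end

section
/- Let G be a divisible ordered abelian group that is finite-dimensional as a ℚ-vector space, and let C ⊆ G be a proper convex subgroup. Then there exists a ∈ G with a > 0 such that: (i) for every n ≥ 1 and every x ∈ C one has x < a/n, and (ii) for every u ∈ G satisfying x < u for all x ∈ C, there exists n ≥ 1 with a/n ≤ u (i.e., the set {a/n : n ≥ 1} is downwards cofinal among the elements strictly above C). -/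
set_option linter.unusedSectionVars false

section Aux
variable {G : Type*} [AddCommGroup G] [LinearOrder G] [IsOrderedAddMonoid G] [Module ℚ G]

lemma aux_nsmul_neg {n : ℕ} (hn : 0 < n) {y : G} (hy : y < 0) : n • y < 0 := by
  have := nsmul_pos (neg_pos.2 hy) hn.ne'
  simpa using neg_pos.mp (by simpa using this)

lemma rat_smul_nonneg' {q : ℚ} (hq : 0 ≤ q) {x : G} (hx : 0 ≤ x) : 0 ≤ q • x := by
  by_contra h
  push_neg at h
  have h1 : q.den • (q • x) < 0 := aux_nsmul_neg q.pos h
  have h2 : q.den • (q • x) = q.num • x := by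
    rw [← Nat.cast_smul_eq_nsmul ℚ, smul_smul, ← Int.cast_smul_eq_zsmul ℚ]
    congr 1
    rw [mul_comm]
    exact_mod_cast Rat.mul_den_eq_num q
  have h3 : 0 ≤ q.num • x := zsmul_nonneg hx (Rat.num_nonneg.2 hq)
  rw [h2] at h1
  exact absurd h1 h3.not_gt

lemma rat_smul_le_smul_right' {q r : ℚ} (h : q ≤ r) {x : G} (hx : 0 ≤ x) :
    q • x ≤ r • x := by
  have := rat_smul_nonneg' (sub_nonneg.2 h) hx
  rw [sub_smul, sub_nonneg] at this
  exact this

lemma rat_smul_le_smul_left' {q : ℚ} (hq : 0 ≤ q) {x y : G} (h : x ≤ y) :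
    q • x ≤ q • y := by
  have := rat_smul_nonneg' hq (sub_nonneg.2 h)
  rw [smul_sub, sub_nonneg] at this
  exact this

lemma rat_smul_pos' {q : ℚ} (hq : 0 < q) {x : G} (hx : 0 < x) : 0 < q • x := by
  rcases (rat_smul_nonneg' hq.le hx.le).lt_or_eq with h | h
  · exact h
  · exfalso
    have : x = 0 := by
      have := congrArg (fun z => q⁻¹ • z) h
      simpa [inv_smul_smul₀ hq.ne'] using this.symm
    exact hx.ne' this

lemma smul_le_abs_smul_abs (q : ℚ) (x : G) : q • x ≤ |q| • |x| := by
  rcases le_total 0 x with hx | hx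
  · calc q • x ≤ |q| • x := rat_smul_le_smul_right' (le_abs_self q) hx
      _ ≤ |q| • |x| := rat_smul_le_smul_left' (abs_nonneg q) (le_abs_self x)
  · have hq : q • x = (-q) • (-x) := by rw [neg_smul, smul_neg, neg_neg]
    rw [hq]
    calc (-q) • (-x) ≤ |q| • (-x) :=
          rat_smul_le_smul_right' (neg_le_abs q) (neg_nonneg.2 hx)
      _ ≤ |q| • |x| := rat_smul_le_smul_left' (abs_nonneg q) (neg_le_abs x)

lemma abs_rat_smul_le' (q : ℚ) (x : G) : |q • x| ≤ |q| • |x| := by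
  rw [abs_le]
  constructor
  · have := smul_le_abs_smul_abs (-q) x
    rw [neg_smul, abs_neg] at this
    exact neg_le.mp this
  · exact smul_le_abs_smul_abs q x

end Aux

theorem stmt_3 {G : Type*} [AddCommGroup G] [LinearOrder G] [IsOrderedAddMonoid G] [Module ℚ G]
    [FiniteDimensional ℚ G]
    (C : AddSubgroup G) (hC : IsConvexAddSubgroup C) (hproper : C ≠ ⊤) :
    ∃ a : G, 0 < a ∧
      (∀ n : ℕ, 1 ≤ n → ∀ x ∈ C, x < ((n : ℚ)⁻¹) • a) ∧
      (∀ u : G, (∀ x ∈ C, x < u) → ∃ n : ℕ, 1 ≤ n ∧ ((n : ℚ)⁻¹) • a ≤ u) := by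
  classical
  obtain ⟨c0, hc0⟩ : ∃ c, c ∉ C := by
    by_contra h
    push_neg at h
    exact hproper ((AddSubgroup.eq_top_iff' C).mpr h)
  obtain ⟨c, hcpos, hcC⟩ : ∃ c : G, 0 < c ∧ c ∉ C := by
    rcases lt_trichotomy c0 0 with h | h | h
    · exact ⟨-c0, neg_pos.2 h, fun hm => hc0 (by simpa using C.neg_mem hm)⟩
    · exact absurd (h ▸ C.zero_mem) hc0
    · exact ⟨c0, h, hc0⟩
  -- key: an element of minimal archimedean class above C
  have key : ∃ a : G, (0 < a ∧ a ∉ C) ∧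
      ∀ u : G, 0 < u → u ∉ C → ∃ n : ℕ, 1 ≤ n ∧ a ≤ n • u := by
    by_contra hk
    push_neg at hk
    have hstep : ∀ s : {x : G // 0 < x ∧ x ∉ C}, ∃ t : {x : G // 0 < x ∧ x ∉ C},
        ∀ n : ℕ, n • (t : G) < (s : G) := by
      rintro ⟨s, hs1, hs2⟩
      obtain ⟨u, hu1, hu2, hu3⟩ := hk s ⟨hs1, hs2⟩
      refine ⟨⟨u, hu1, hu2⟩, ?_⟩
      intro n
      rcases Nat.eq_zero_or_pos n with rfl | hn
      · simpa using hs1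
      · exact hu3 n hn
    choose f hf using hstep
    let seq : ℕ → {x : G // 0 < x ∧ x ∉ C} := fun k => f^[k] ⟨c, hcpos, hcC⟩
    have hseq : ∀ k n : ℕ, n • ((seq (k+1) : G)) < (seq k : G) := by
      intro k n
      have : seq (k+1) = f (seq k) := Function.iterate_succ_apply' f k _
      rw [this]
      exact hf (seq k) n
    let D : ℕ → Submodule ℚ G := fun k =>
      { carrier := {x | ∃ n : ℕ, |x| ≤ n • (seq k : G)}
        zero_mem' := ⟨0, by simp⟩
        add_mem' := by
          rintro x y ⟨n, hn⟩ ⟨m, hm⟩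
          exact ⟨n + m, (abs_add_le x y).trans (by rw [add_nsmul]; exact add_le_add hn hm)⟩
        smul_mem' := by
          rintro q x ⟨n, hn⟩
          obtain ⟨m, hm⟩ := exists_nat_ge |q|
          refine ⟨n * m, ?_⟩
          calc |q • x| ≤ |q| • |x| := abs_rat_smul_le' q x
            _ ≤ (m : ℚ) • |x| := rat_smul_le_smul_right' hm (abs_nonneg x)
            _ = m • |x| := Nat.cast_smul_eq_nsmul ℚ m |x|
            _ ≤ m • (n • (seq k : G)) := nsmul_le_nsmul_right hn m
            _ = (n * m) • (seq k : G) := (mul_nsmul (seq k : G) n m).symm }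
    have hmem : ∀ k, (seq k : G) ∈ D k := by
      intro k
      exact ⟨1, by simp [abs_of_pos (seq k).2.1]⟩
    have hlt : ∀ k, D (k + 1) < D k := by
      intro k
      have hle : D (k + 1) ≤ D k := by
        rintro x ⟨n, hn⟩
        exact ⟨1, by simpa using (hn.trans (hseq k n).le)⟩
      refine lt_of_le_of_ne hle (fun he => ?_)
      have h1 : (seq k : G) ∈ D (k + 1) := by rw [he]; exact hmem k
      obtain ⟨n, hn⟩ := h1
      rw [abs_of_pos (seq k).2.1] at hn
      exact absurd hn (not_le.2 (hseq k n))
    have hrank : ∀ k, Module.finrank ℚ (D (k + 1)) < Module.finrank ℚ (D k) :=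
      fun k => Submodule.finrank_lt_finrank_of_lt (hlt k)
    have hbound : ∀ k, Module.finrank ℚ (D k) + k ≤ Module.finrank ℚ (D 0) := by
      intro k
      induction k with
      | zero => simp
      | succ k ih => have := hrank k; omega
    have := hbound (Module.finrank ℚ (D 0) + 1)
    omega
  obtain ⟨a, ⟨hapos, haC⟩, ha⟩ := key
  refine ⟨a, hapos, ?_, ?_⟩
  · intro n hn x hx
    have hn0 : ((n : ℚ)) ≠ 0 := by exact_mod_cast Nat.one_le_iff_ne_zero.mp hn
    set b := ((n : ℚ)⁻¹) • a with hb
    have hbpos : 0 < b := rat_smul_pos' (by positivity) hapos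
    have hbC : b ∉ C := by
      intro hbc
      have h1 : n • b ∈ C := AddSubgroup.nsmul_mem C hbc n
      have h2 : n • b = a := by
        rw [← Nat.cast_smul_eq_nsmul ℚ, hb, smul_smul, mul_inv_cancel₀ hn0, one_smul]
      exact haC (h2 ▸ h1)
    by_contra hxb
    push_neg at hxb
    exact hbC (hC C.zero_mem hx hbpos.le hxb)
  · intro u hu
    have hu0 : 0 < u := hu 0 C.zero_mem
    have huC : u ∉ C := fun h => lt_irrefl u (hu u h)
    obtain ⟨n, hn1, hn2⟩ := ha u hu0 huC
    have hn0 : ((n : ℚ)) ≠ 0 := by exact_mod_cast Nat.one_le_iff_ne_zero.mp hn1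
    refine ⟨n, hn1, ?_⟩
    have : ((n : ℚ)⁻¹) • a ≤ ((n : ℚ)⁻¹) • ((n : ℚ) • u) := by
      apply rat_smul_le_smul_left' (by positivity)
      rw [Nat.cast_smul_eq_nsmul]
      exact hn2
    rwa [inv_smul_smul₀ hn0] at this
end

section
/- Let G be a divisible ordered abelian group of finite dimension d as a ℚ-vector space. Then the convex subgroups of G are linearly ordered by inclusion, there are at most d + 1 of them (in particular, only finitely many), and for every proper convex subgroup C of G there exists a minimal convex subgroup C′ with C ⊊ C′. -/
section Aux

variable {G : Type*} [AddCommGroup G] [LinearOrder G] [IsOrderedAddMonoid G]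

lemma aux_abs_mem {C : AddSubgroup G} {x : G} (hx : x ∈ C) : |x| ∈ C := by
  rcases abs_cases x with ⟨h, _⟩ | ⟨h, _⟩
  · rw [h]; exact hx
  · rw [h]; exact C.neg_mem hx

lemma aux_mem_of_abs_mem {C : AddSubgroup G} (hC : IsConvexAddSubgroup C) {x : G}
    (hx : |x| ∈ C) : x ∈ C :=
  hC (C.neg_mem hx) hx (neg_abs_le x) (le_abs_self x)

lemma aux_abs_nsmul (n : ℕ) (y : G) : |n • y| = n • |y| := by
  rcases le_or_gt 0 y with h | h
  · rw [abs_of_nonneg h, abs_of_nonneg (nsmul_nonneg h n)]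
  · rw [abs_of_neg h, abs_of_nonpos (nsmul_nonpos h.le n), neg_nsmul]

lemma aux_mem_of_nsmul_mem {C : AddSubgroup G} (hC : IsConvexAddSubgroup C) {x : G}
    {n : ℕ} (hn : 1 ≤ n) (h : n • x ∈ C) : x ∈ C := by
  apply aux_mem_of_abs_mem hC
  have h1 : |x| ≤ n • |x| := by
    conv_lhs => rw [← one_nsmul |x|]
    exact nsmul_le_nsmul_left (abs_nonneg x) hn
  have h2 : n • |x| = |n • x| := (aux_abs_nsmul n x).symm
  exact hC C.zero_mem (h2 ▸ aux_abs_mem h) (abs_nonneg x) h1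

/-- A convex subgroup of a divisible (ℚ-module) ordered abelian group is a ℚ-submodule. -/
def convexSubmodule [Module ℚ G] (C : AddSubgroup G) (hC : IsConvexAddSubgroup C) :
    Submodule ℚ G where
  carrier := C
  add_mem' := fun ha hb => C.add_mem ha hb
  zero_mem' := C.zero_mem
  smul_mem' := by
    intro q x hx
    have key : q.den • (q • x) = q.num • x := by
      rw [← Nat.cast_smul_eq_nsmul ℚ, ← Int.cast_smul_eq_zsmul ℚ, smul_smul]
      congr 1
      have hden : (q.den : ℚ) ≠ 0 := by exact_mod_cast q.den_ne_zero
      rw [mul_comm, ← eq_div_iff hden]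
      exact (Rat.num_div_den q).symm
    exact aux_mem_of_nsmul_mem hC q.pos (key ▸ C.zsmul_mem hx q.num)

lemma convex_le_total {C₁ C₂ : AddSubgroup G} (h₁ : IsConvexAddSubgroup C₁)
    (h₂ : IsConvexAddSubgroup C₂) : C₁ ≤ C₂ ∨ C₂ ≤ C₁ := by
  by_contra h
  push_neg at h
  obtain ⟨hn1, hn2⟩ := h
  obtain ⟨a, ha1, ha2⟩ := SetLike.not_le_iff_exists.mp hn1
  obtain ⟨b, hb1, hb2⟩ := SetLike.not_le_iff_exists.mp hn2
  have ha2' : |a| ∉ C₂ := fun h => ha2 (aux_mem_of_abs_mem h₂ h)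
  have hb2' : |b| ∉ C₁ := fun h => hb2 (aux_mem_of_abs_mem h₁ h)
  rcases le_total |a| |b| with h | h
  · exact ha2' (h₂ C₂.zero_mem (aux_abs_mem hb1) (abs_nonneg a) h)
  · exact hb2' (h₁ C₁.zero_mem (aux_abs_mem ha1) (abs_nonneg b) h)

end Aux

theorem stmt_5 {G : Type*} [AddCommGroup G] [LinearOrder G] [IsOrderedAddMonoid G] [Module ℚ G]
    [FiniteDimensional ℚ G] :
    (∀ C₁ C₂ : AddSubgroup G, IsConvexAddSubgroup C₁ → IsConvexAddSubgroup C₂ →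
      C₁ ≤ C₂ ∨ C₂ ≤ C₁) ∧
    {C : AddSubgroup G | IsConvexAddSubgroup C}.Finite ∧
    Nat.card {C : AddSubgroup G | IsConvexAddSubgroup C} ≤ Module.finrank ℚ G + 1 ∧
    (∀ C : AddSubgroup G, IsConvexAddSubgroup C → C ≠ ⊤ →
      ∃ C' : AddSubgroup G, IsConvexAddSubgroup C' ∧ C < C' ∧
        ∀ C'' : AddSubgroup G, IsConvexAddSubgroup C'' → C < C'' → C' ≤ C'') := by
  have hlin : ∀ C₁ C₂ : AddSubgroup G, IsConvexAddSubgroup C₁ → IsConvexAddSubgroup C₂ →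
      C₁ ≤ C₂ ∨ C₂ ≤ C₁ := fun _ _ h₁ h₂ => convex_le_total h₁ h₂
  -- injective map into Fin (d+1)
  have hinj : Function.Injective
      (fun C : {C : AddSubgroup G | IsConvexAddSubgroup C} =>
        (⟨Module.finrank ℚ (convexSubmodule C.1 C.2),
          Nat.lt_succ_of_le (Submodule.finrank_le _)⟩ : Fin (Module.finrank ℚ G + 1))) := by
    rintro ⟨C₁, h₁⟩ ⟨C₂, h₂⟩ h
    simp only [Fin.mk.injEq] at h
    have heq : ∀ D₁ D₂ : AddSubgroup G, ∀ g₁ : IsConvexAddSubgroup D₁,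
        ∀ g₂ : IsConvexAddSubgroup D₂, D₁ ≤ D₂ →
        Module.finrank ℚ (convexSubmodule D₁ g₁) = Module.finrank ℚ (convexSubmodule D₂ g₂) →
        D₁ = D₂ := by
      intro D₁ D₂ g₁ g₂ hle hrk
      have hle' : convexSubmodule D₁ g₁ ≤ convexSubmodule D₂ g₂ := hle
      have := Submodule.eq_of_le_of_finrank_eq hle' hrk
      ext x
      constructor
      · exact fun hx => hle hx
      · intro hx
        have : x ∈ convexSubmodule D₁ g₁ := this ▸ hx
        exact this
    rcases convex_le_total h₁ h₂ with hle | hle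
    · exact Subtype.ext (heq C₁ C₂ h₁ h₂ hle h)
    · exact Subtype.ext (heq C₂ C₁ h₂ h₁ hle h.symm).symm
  have hfin : {C : AddSubgroup G | IsConvexAddSubgroup C}.Finite := by
    rw [Set.finite_coe_iff.symm]
    exact Finite.of_injective _ hinj
  have hcard : Nat.card {C : AddSubgroup G | IsConvexAddSubgroup C} ≤ Module.finrank ℚ G + 1 := by
    have := Nat.card_le_card_of_injective _ hinj
    simpa using this
  refine ⟨hlin, hfin, hcard, ?_⟩
  intro C hC hCne
  have htop : IsConvexAddSubgroup (⊤ : AddSubgroup G) := fun _ _ _ _ _ _ _ => trivial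
  set S : Set (AddSubgroup G) := {C'' | IsConvexAddSubgroup C'' ∧ C < C''} with hS
  have hSfin : S.Finite := hfin.subset (fun x hx => hx.1)
  have hSne : S.Nonempty := ⟨⊤, htop, lt_top_iff_ne_top.mpr hCne⟩
  obtain ⟨C', hC'S, hmin⟩ := hSfin.exists_minimal hSne
  refine ⟨C', hC'S.1, hC'S.2, ?_⟩
  intro C'' hC'' hCC''
  rcases convex_le_total hC'S.1 hC'' with h | h
  · exact h
  · exact hmin ⟨hC'', hCC''⟩ h
end

section
/- Let Q be a divisible ordered abelian group and Z an integer part of Q with least positive element 1. Then Z is a ℤ-group: for every x ∈ Z and every integer m ≥ 1, there is a unique k ∈ {0, 1, …, m−1} such that x ≡ k (mod m), i.e., x − k·1 ∈ m·Z. -/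
/-- `x ≡ k (mod m)` with respect to the integer part `Z` with least positive element `one`:
`x - k·one ∈ m·Z`. -/
def ModCong {Q : Type*} [AddCommGroup Q] [LinearOrder Q] [IsOrderedAddMonoid Q] (Z : AddSubgroup Q) (one : Q)
    (m : ℕ) (k : ℤ) (x : Q) : Prop :=
  ∃ z ∈ Z, x - k • one = m • z

theorem stmt_7 {Q : Type*} [AddCommGroup Q] [LinearOrder Q] [IsOrderedAddMonoid Q]
    (hdiv : ∀ (x : Q) (n : ℕ), 0 < n → ∃ y : Q, n • y = x)
    (Z : AddSubgroup Q) (one : Q) (hZ : IsIntegerPart Z one) :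
    ∀ x ∈ Z, ∀ m : ℕ, 1 ≤ m → ∃! k : ℕ, k < m ∧ ModCong Z one m (k : ℤ) x := by
  obtain ⟨h1Z, h1pos, hleast, hfloor⟩ := hZ
  -- every element of Z in [0, m•one) is k•one for some k < m
  have key : ∀ m : ℕ, ∀ w : Q, w ∈ Z → 0 ≤ w → w < m • one → ∃ k < m, w = k • one := by
    intro m
    induction m with
    | zero =>
      intro w _ h0 hlt
      simp only [zero_smul] at hlt
      exact absurd hlt (not_lt.mpr h0)
    | succ m ih =>
      intro w hw h0 hlt
      by_cases hcase : w < one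
      · refine ⟨0, Nat.succ_pos m, ?_⟩
        rcases eq_or_lt_of_le h0 with h | h
        · simp [← h]
        · exact absurd (hleast w hw h) (not_le.mpr hcase)
      · push_neg at hcase
        have hw' : w - one ∈ Z := sub_mem hw h1Z
        rw [succ_nsmul] at hlt
        obtain ⟨k, hk, hkeq⟩ := ih (w - one) hw' (sub_nonneg.mpr hcase)
          (sub_lt_iff_lt_add.mpr hlt)
        refine ⟨k + 1, Nat.succ_lt_succ hk, ?_⟩
        rw [succ_nsmul, ← hkeq]
        abel
  intro x hx m hm
  obtain ⟨y, hy⟩ := hdiv x m hm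
  obtain ⟨n, hn, hny, hyn⟩ := hfloor y
  have hw : x - m • n = m • (y - n) := by rw [smul_sub, hy]
  have hwZ : x - m • n ∈ Z := sub_mem hx (nsmul_mem hn m)
  have hw0 : 0 ≤ x - m • n := by
    rw [hw]
    exact nsmul_nonneg (sub_nonneg.mpr hny) m
  have hwlt : x - m • n < m • one := by
    rw [hw]
    have h1 : 0 < one - (y - n) := sub_pos.mpr (sub_lt_iff_lt_add'.mpr hyn)
    have h2 : 0 < m • (one - (y - n)) := nsmul_pos h1 (by omega)
    rw [smul_sub] at h2
    exact sub_pos.mp h2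
  obtain ⟨k, hk, hkeq⟩ := key m _ hwZ hw0 hwlt
  refine ⟨k, ⟨hk, n, hn, ?_⟩, ?_⟩
  · rw [natCast_zsmul, ← hkeq]
    abel
  · rintro k' ⟨hk', z', hz', heq'⟩
    rw [natCast_zsmul] at heq'
    have heq : x - k • one = m • n := by rw [← hkeq]; abel
    -- no two distinct residues work
    have main : ∀ a b : ℕ, a < m → b < m → ∀ za ∈ Z, ∀ zb ∈ Z,
        x - a • one = m • za → x - b • one = m • zb → ¬ a < b := by
      intro a b ha hb za hza zb hzb hea heb hab
      have hthis : (b • one : Q) - a • one = m • za - m • zb := by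
        calc (b • one : Q) - a • one = (x - a • one) - (x - b • one) := by abel
        _ = m • za - m • zb := by rw [hea, heb]
      have hsplit : ((b - a : ℕ) • one : Q) = b • one - a • one := by
        have hba : (b - a) + a = b := Nat.sub_add_cancel hab.le
        calc ((b - a : ℕ) • one : Q) = (b - a) • one + a • one - a • one := by abel
        _ = ((b - a) + a) • one - a • one := by rw [add_smul]
        _ = b • one - a • one := by rw [hba]
      have hdiff : (b - a) • one = m • (za - zb) := by
        rw [smul_sub, ← hthis, hsplit]
      have hpos : 0 < (b - a) • one := nsmul_pos h1pos (by omega)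
      have hzpos : 0 < za - zb := by
        by_contra hle
        push_neg at hle
        have : m • (za - zb) ≤ 0 := nsmul_nonpos hle m
        rw [← hdiff] at this
        exact absurd this (not_le.mpr hpos)
      have hge : one ≤ za - zb := hleast _ (sub_mem hza hzb) hzpos
      have h1 : m • one ≤ m • (za - zb) := nsmul_le_nsmul_right hge m
      have h2 : (b - a) • one < m • one := by
        have h0 : 0 < one := h1pos
        exact nsmul_lt_nsmul_left h0 (by omega)
      rw [← hdiff] at h1
      exact absurd (lt_of_lt_of_le h2 h1) (lt_irrefl _)
    rcases lt_trichotomy k' k with h | h | h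
    · exact absurd h (main k' k hk' hk z' hz' n hn heq' heq)
    · exact h
    · exact absurd h (main k k' hk hk' n hn z' hz' heq heq')
end

section
/- Let Q be a divisible ordered abelian group, Z an integer part of Q with least positive element 1, and L a convex subgroup of Q with 1 ∈ L. Let (c_i)_{i∈I} and (d_j)_{j∈J} be nonempty finite families of elements of Q, m ≥ 1 an integer, and k ∈ {0, …, m−1}. Then the following are equivalent: (a) there exists x ∈ Z with x ≡ k (mod m) such that for all i ∈ I and j ∈ J: x ≤ c_i, d_j ≤ x, c_i − x ∉ L, and x − d_j ∉ L; (b) for all i ∈ I and j ∈ J: d_j ≤ c_i and c_i − d_j ∉ L. -/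
theorem stmt_11 {Q : Type*} [AddCommGroup Q] [LinearOrder Q] [IsOrderedAddMonoid Q]
    (hdiv : ∀ (x : Q) (n : ℕ), 0 < n → ∃ y : Q, n • y = x)
    (Z L : AddSubgroup Q) (one : Q) (hZ : IsIntegerPart Z one)
    (hL : IsConvexAddSubgroup L) (honeL : one ∈ L)
    {ι κ : Type*} [Finite ι] [Finite κ] [Nonempty ι] [Nonempty κ]
    (c : ι → Q) (d : κ → Q)
    (m : ℕ) (hm : 1 ≤ m) (k : ℕ) (hk : k < m) :
    (∃ x ∈ Z, ModCong Z one m (k : ℤ) x ∧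
        ∀ (i : ι) (j : κ), x ≤ c i ∧ d j ≤ x ∧ c i - x ∉ L ∧ x - d j ∉ L) ↔
      (∀ (i : ι) (j : κ), d j ≤ c i ∧ c i - d j ∉ L) := by
  obtain ⟨honeZ, honepos, hleast, hfloor⟩ := hZ
  constructor
  · rintro ⟨x, hxZ, hmod, hx⟩ i j
    obtain ⟨hxc, hdx, hcL, hdL⟩ := hx i j
    refine ⟨hdx.trans hxc, fun hcd => hcL ?_⟩
    exact hL L.zero_mem hcd (sub_nonneg.mpr hxc) (sub_le_sub_left hdx _)
  · intro h
    obtain ⟨i₀, hi₀⟩ := Finite.exists_min c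
    obtain ⟨j₀, hj₀⟩ := Finite.exists_max d
    set C := c i₀ with hC
    set D := d j₀ with hD
    have hDC : D ≤ C := (h i₀ j₀).1
    have hCDL : C - D ∉ L := (h i₀ j₀).2
    obtain ⟨half, hhalf⟩ := hdiv (C - D) 2 (by norm_num)
    rw [two_nsmul] at hhalf
    have hhalf0 : 0 ≤ half := by
      by_contra hc; push_neg at hc
      have h2 : half + half < 0 := add_neg hc hc
      rw [hhalf] at h2
      exact absurd h2 (not_lt.mpr (sub_nonneg.mpr hDC))
    have hhalfL : half ∉ L := fun hh => hCDL (by rw [← hhalf]; exact L.add_mem hh hh)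
    have hmL : ∀ n : ℕ, n • one ∈ L := fun n => AddSubgroup.nsmul_mem L honeL n
    have hbig : (m + 1) • one < half := by
      by_contra hc; push_neg at hc
      exact hhalfL (hL L.zero_mem (hmL (m + 1)) hhalf0 hc)
    set y := D + half with hy
    obtain ⟨x₀, hx₀Z, hx₀le, hx₀lt⟩ := hfloor y
    obtain ⟨t, ht⟩ := hdiv (x₀ - (k : ℤ) • one) m hm
    obtain ⟨w, hwZ, hwle, hwlt⟩ := hfloor t
    refine ⟨m • w + (k : ℤ) • one, Z.add_mem (Z.nsmul_mem hwZ m) (Z.zsmul_mem honeZ _),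
      ⟨w, hwZ, by simp⟩, fun i j => ?_⟩
    set x := m • w + (k : ℤ) • one with hxdef
    have hxle : x ≤ x₀ := by
      have h1 : m • w ≤ m • t := nsmul_le_nsmul_right hwle m
      have h2 : m • w + (k : ℤ) • one ≤ m • t + (k : ℤ) • one := add_le_add_left h1 _
      rwa [ht, sub_add_cancel] at h2
    have hgap : x₀ - x ≤ m • one := by
      have h1 : m • (t - w) ≤ m • one :=
        nsmul_le_nsmul_right (sub_le_iff_le_add'.mpr hwlt.le) m
      rw [smul_sub] at h1
      have h2 : x₀ - x = m • t - m • w := by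
        rw [hxdef, sub_eq_iff_eq_add.mp ht.symm]; abel
      rw [h2]; exact h1
    have hsucc : (m + 1) • one = m • one + one := succ_nsmul one m
    have hxy : x ≤ y := hxle.trans hx₀le
    have hyx : y - x < (m + 1) • one := by
      rw [hsucc]
      calc y - x < (x₀ + one) - x := sub_lt_sub_right hx₀lt x
        _ = (x₀ - x) + one := by abel
        _ ≤ m • one + one := add_le_add_left hgap one
    have hCy : C - y = half := by
      rw [hy, sub_add_eq_sub_sub, ← hhalf]; abel
    have hyD : y - D = half := by rw [hy]; abel
    have hci : C ≤ c i := hi₀ i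
    have hdj : d j ≤ D := hj₀ j
    have hyC : y ≤ C := sub_nonneg.mp (by rw [hCy]; exact hhalf0)
    refine ⟨hxy.trans (hyC.trans hci), ?_, fun hmem => ?_, fun hmem => ?_⟩
    · have h1 : y - (m + 1) • one < x := sub_lt_comm.mp hyx
      have h2 : D < y - (m + 1) • one :=
        lt_sub_iff_add_lt.mpr (by rw [hy]; exact add_lt_add_right hbig D)
      exact hdj.trans ((h2.trans h1).le)
    · refine hhalfL (hL L.zero_mem hmem hhalf0 ?_)
      calc half = C - y := hCy.symm
        _ ≤ C - x := sub_le_sub_left hxy C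
        _ ≤ c i - x := sub_le_sub_right hci x
    · have hmem' : (x - d j) + (m + 1) • one ∈ L := L.add_mem hmem (hmL (m + 1))
      refine hhalfL (hL L.zero_mem hmem' hhalf0 ?_)
      calc half = y - D := hyD.symm
        _ ≤ ((m + 1) • one + x) - d j := sub_le_sub (sub_lt_iff_lt_add.mp hyx).le hdj
        _ = x - d j + (m + 1) • one := by abel
end

section
/- Let Q be a divisible ordered abelian group, Z an integer part of Q with least positive element 1, and L a convex subgroup of Q with 1 ∈ L. Let (c_i)_{i∈I} and (d_j)_{j∈J} be finite (possibly empty) families of elements of Q, m ≥ 1 an integer, and k ∈ {0, …, m−1}. Then the following are equivalent: (a) there exists x ∈ Z ∩ L with x ≡ k (mod m) such that d_j ≤ x ≤ c_i for all i ∈ I and j ∈ J; (b) for every i ∈ I, c_i ≥ 0 or c_i ∈ L; for every j ∈ J, d_j ≤ 0 or d_j ∈ L; and for every i ∈ I and j ∈ J there exists x ∈ Z with d_j ≤ x ≤ c_i and x ≡ k (mod m). -/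
theorem stmt_12 {Q : Type*} [AddCommGroup Q] [LinearOrder Q] [IsOrderedAddMonoid Q]
    (hdiv : ∀ (x : Q) (n : ℕ), 0 < n → ∃ y : Q, n • y = x)
    (Z L : AddSubgroup Q) (one : Q) (hZ : IsIntegerPart Z one)
    (hL : IsConvexAddSubgroup L) (honeL : one ∈ L)
    {ι κ : Type*} [Finite ι] [Finite κ]
    (c : ι → Q) (d : κ → Q)
    (m : ℕ) (hm : 1 ≤ m) (k : ℕ) (hk : k < m) :
    (∃ x ∈ Z ⊓ L, ModCong Z one m (k : ℤ) x ∧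
        (∀ i : ι, x ≤ c i) ∧ (∀ j : κ, d j ≤ x)) ↔
      ((∀ i : ι, 0 ≤ c i ∨ c i ∈ L) ∧ (∀ j : κ, d j ≤ 0 ∨ d j ∈ L) ∧
        ∀ (i : ι) (j : κ), ∃ x ∈ Z, d j ≤ x ∧ x ≤ c i ∧ ModCong Z one m (k : ℤ) x) := by
  obtain ⟨honeZ, hone0, hleast, hfloor⟩ := hZ
  have hm0 : 0 < m := hm
  -- key: greatest congruent element ≤ t (up to the interval (t - m•one, t])
  have key : ∀ t : Q, ∃ x, x ∈ Z ∧ ModCong Z one m (k : ℤ) x ∧ t - m • one < x ∧ x ≤ t := by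
    intro t
    obtain ⟨y, hy⟩ := hdiv (t - (k : ℤ) • one) m hm0
    obtain ⟨n, hnZ, hny, hyn⟩ := hfloor y
    refine ⟨(k : ℤ) • one + m • n,
      Z.add_mem (Z.zsmul_mem honeZ _) (Z.nsmul_mem hnZ _),
      ⟨n, hnZ, by abel⟩, ?_, ?_⟩
    · have h1 : m • y < m • (n + one) := nsmul_lt_nsmul_right hm0.ne' hyn
      have h2 : m • (n + one) = m • n + m • one := nsmul_add n one m
      rw [h2, hy] at h1
      have h3 : t < m • n + m • one + (k : ℤ) • one := sub_lt_iff_lt_add.mp h1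
      rw [sub_lt_iff_lt_add]
      exact lt_of_lt_of_eq h3 (by abel)
    · have h1 : m • n ≤ m • y := nsmul_le_nsmul_right hny m
      rw [hy] at h1
      have h3 : m • n + (k : ℤ) • one ≤ t := le_sub_iff_add_le.mp h1
      exact le_of_eq_of_le (by abel) h3
  constructor
  · rintro ⟨x, hx, hcong, hxc, hdx⟩
    rw [AddSubgroup.mem_inf] at hx
    refine ⟨fun i => ?_, fun j => ?_, fun i j => ⟨x, hx.1, hdx j, hxc i, hcong⟩⟩
    · rcases le_or_gt 0 (c i) with h | h
      · exact Or.inl h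
      · exact Or.inr (hL hx.2 L.zero_mem (hxc i) h.le)
    · rcases le_or_gt (d j) 0 with h | h
      · exact Or.inl h
      · exact Or.inr (hL L.zero_mem hx.2 h.le (hdx j))
  · rintro ⟨hc, hd, hw⟩
    -- an element A of L with 0 ≤ A bounding all d j from above
    have hA : ∃ A, A ∈ L ∧ 0 ≤ A ∧ ∀ j, d j ≤ A := by
      by_cases h : ∃ j, 0 < d j
      · cases nonempty_fintype κ
        obtain ⟨j₀, hj₀⟩ := h
        obtain ⟨j₁, -, hj₁⟩ :=
          Finset.exists_max_image Finset.univ d ⟨j₀, Finset.mem_univ _⟩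
        have hpos : 0 < d j₁ := lt_of_lt_of_le hj₀ (hj₁ j₀ (Finset.mem_univ _))
        refine ⟨d j₁, ?_, hpos.le, fun j => hj₁ j (Finset.mem_univ _)⟩
        rcases hd j₁ with h' | h'
        · exact absurd hpos (not_lt.mpr h')
        · exact h'
      · push_neg at h
        exact ⟨0, L.zero_mem, le_refl 0, h⟩
    -- an element B of L with B ≤ 0 bounding all c i from below
    have hB : ∃ B, B ∈ L ∧ B ≤ 0 ∧ ∀ i, B ≤ c i := by
      by_cases h : ∃ i, c i < 0
      · cases nonempty_fintype ι
        obtain ⟨i₀, hi₀⟩ := h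
        obtain ⟨i₁, -, hi₁⟩ :=
          Finset.exists_min_image Finset.univ c ⟨i₀, Finset.mem_univ _⟩
        have hneg : c i₁ < 0 := lt_of_le_of_lt (hi₁ i₀ (Finset.mem_univ _)) hi₀
        refine ⟨c i₁, ?_, hneg.le, fun i => hi₁ i (Finset.mem_univ _)⟩
        rcases hc i₁ with h' | h'
        · exact absurd hneg (not_lt.mpr h')
        · exact h'
      · push_neg at h
        exact ⟨0, L.zero_mem, le_refl 0, h⟩
    obtain ⟨A, hAL, hA0, hAd⟩ := hA
    obtain ⟨B, hBL, hB0, hBc⟩ := hB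
    -- a congruent element of Z satisfying all the bounds (not necessarily in L)
    have hx0 : ∃ x, x ∈ Z ∧ ModCong Z one m (k : ℤ) x ∧
        (∀ i, x ≤ c i) ∧ (∀ j, d j ≤ x) := by
      by_cases hι : Nonempty ι
      · by_cases hκ : Nonempty κ
        · cases nonempty_fintype ι; cases nonempty_fintype κ
          obtain ⟨i₀, -, hi₀⟩ := Finset.exists_min_image Finset.univ c
            ⟨Classical.arbitrary ι, Finset.mem_univ _⟩
          obtain ⟨j₀, -, hj₀⟩ := Finset.exists_max_image Finset.univ d
            ⟨Classical.arbitrary κ, Finset.mem_univ _⟩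
          obtain ⟨x, hxZ, hdx, hxc, hcong⟩ := hw i₀ j₀
          exact ⟨x, hxZ, hcong, fun i => le_trans hxc (hi₀ i (Finset.mem_univ _)),
            fun j => le_trans (hj₀ j (Finset.mem_univ _)) hdx⟩
        · obtain ⟨x, hxZ, hcong, -, hxB⟩ := key B
          exact ⟨x, hxZ, hcong, fun i => le_trans hxB (hBc i),
            fun j => absurd ⟨j⟩ hκ⟩
      · obtain ⟨x, hxZ, hcong, hgt, -⟩ := key (A + m • one)
        rw [add_sub_cancel_right] at hgt
        exact ⟨x, hxZ, hcong, fun i => absurd ⟨i⟩ hι,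
          fun j => le_trans (hAd j) hgt.le⟩
    obtain ⟨x₀, hx₀Z, hx₀cong, hx₀c, hx₀d⟩ := hx0
    have hmoneL : m • one ∈ L := L.nsmul_mem honeL m
    rcases le_or_gt x₀ (A + m • one) with h1 | h1
    · rcases le_or_gt (B - m • one) x₀ with h2 | h2
      · exact ⟨x₀, AddSubgroup.mem_inf.mpr
          ⟨hx₀Z, hL (L.sub_mem hBL hmoneL) (L.add_mem hAL hmoneL) h2 h1⟩,
          hx₀cong, hx₀c, hx₀d⟩
      · obtain ⟨x, hxZ, hcong, hgt, hle⟩ := key B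
        exact ⟨x, AddSubgroup.mem_inf.mpr
          ⟨hxZ, hL (L.sub_mem hBL hmoneL) hBL hgt.le hle⟩, hcong,
          fun i => le_trans hle (hBc i),
          fun j => le_trans (hx₀d j) (h2.trans hgt).le⟩
    · obtain ⟨x, hxZ, hcong, hgt, hle⟩ := key (A + m • one)
      have hAx : A ≤ x := by rw [add_sub_cancel_right] at hgt; exact hgt.le
      exact ⟨x, AddSubgroup.mem_inf.mpr
        ⟨hxZ, hL hAL (L.add_mem hAL hmoneL) hAx hle⟩, hcong,
        fun i => le_trans (le_trans hle h1.le) (hx₀c i),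
        fun j => le_trans (hAd j) hAx⟩
end
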